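/- Let H be the discrete Heisenberg group with generators x = (1,0,0), y = (0,0,1), z = (0,1,0), and let φ be the endomorphism φ(a,b,c) = (2a, 4b, 2c). Then the growth rate of φ restricted to the center Z = {(0,b,0) : b ∈ ℤ} (with generating set {z}) equals 4, while GR(φ on H) ≤ 2; in particular GR(φ on H) < GR(φ on Z). -/

import Mathlib

/-- The discrete Heisenberg group: triples `(a, b, c)` of integers with
`(a,b,c)(p,q,r) = (a+p, b+q+a*r, c+r)`. -/
@[ext]
structure Heis where
  a : ℤ
  b : ℤ
  c : ℤ
deriving DecidableEq

namespace Heis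

instance : Mul Heis := ⟨fun x y => ⟨x.a + y.a, x.b + y.b + x.a * y.c, x.c + y.c⟩⟩
instance : One Heis := ⟨⟨0, 0, 0⟩⟩
instance : Inv Heis := ⟨fun x => ⟨-x.a, x.a * x.c - x.b, -x.c⟩⟩

@[simp] lemma mul_a (x y : Heis) : (x * y).a = x.a + y.a := rfl
@[simp] lemma mul_b (x y : Heis) : (x * y).b = x.b + y.b + x.a * y.c := rfl
@[simp] lemma mul_c (x y : Heis) : (x * y).c = x.c + y.c := rfl
@[simp] lemma one_a : (1 : Heis).a = 0 := rfl
@[simp] lemma one_b : (1 : Heis).b = 0 := rfl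
@[simp] lemma one_c : (1 : Heis).c = 0 := rfl
@[simp] lemma inv_a (x : Heis) : x⁻¹.a = -x.a := rfl
@[simp] lemma inv_b (x : Heis) : x⁻¹.b = x.a * x.c - x.b := rfl
@[simp] lemma inv_c (x : Heis) : x⁻¹.c = -x.c := rfl

instance : Group Heis where
  mul_assoc x y z := by ext <;> simp <;> ring
  one_mul x := by ext <;> simp
  mul_one x := by ext <;> simp
  inv_mul_cancel x := by ext <;> simp

end Heis

open Filter

/-- Word length of `g` with respect to `S ∪ S⁻¹`. -/
noncomputable def wordLength {G : Type*} [Group G] (S : Set G) (g : G) : ℕ :=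
  sInf {n | ∃ l : List G, l.length = n ∧ (∀ x ∈ l, x ∈ S ∨ x⁻¹ ∈ S) ∧ l.prod = g}

/-- The endomorphism `(a,b,c) ↦ (2a, 4b, 2c)` of the Heisenberg group. -/
def φ : Heis → Heis := fun g => ⟨2 * g.a, 4 * g.b, 2 * g.c⟩

/-- Generators of the Heisenberg group. -/
def x : Heis := ⟨1, 0, 0⟩
def y : Heis := ⟨0, 0, 1⟩
def z : Heis := ⟨0, 1, 0⟩

lemma wordLength_le' {G : Type*} [Group G] (S : Set G) (g : G) (l : List G)
    (h1 : ∀ x ∈ l, x ∈ S ∨ x⁻¹ ∈ S) (h2 : l.prod = g) : wordLength S g ≤ l.length :=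
  Nat.sInf_le ⟨l, rfl, h1, h2⟩

lemma phi_iter (n : ℕ) (g : Heis) : φ^[n] g = ⟨2^n * g.a, 4^n * g.b, 2^n * g.c⟩ := by
  induction n generalizing g with
  | zero => simp
  | succ n ih =>
    rw [Function.iterate_succ_apply, ih]
    show (⟨2^n * (2 * g.a), 4^n * (4 * g.b), 2^n * (2 * g.c)⟩ : Heis) = _
    ext <;> simp [pow_succ] <;> ring

lemma pow_x (n : ℕ) : x ^ n = ⟨n, 0, 0⟩ := by
  induction n with
  | zero => rfl
  | succ n ih => rw [pow_succ, ih]; ext <;> simp [x]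

lemma pow_y (n : ℕ) : y ^ n = ⟨0, 0, n⟩ := by
  induction n with
  | zero => rfl
  | succ n ih => rw [pow_succ, ih]; ext <;> simp [y]

lemma mem_gen (w : Heis) (hw : w ∈ ({x, y, z} : Set Heis)) :
    ∀ u ∈ List.replicate (m : ℕ) w, u ∈ ({x, y, z} : Set Heis) ∨ u⁻¹ ∈ ({x, y, z} : Set Heis) := by
  intro u hu
  rw [List.eq_of_mem_replicate hu]
  exact Or.inl hw

theorem heisenberg_growth_rates (L : ℝ)
    (hL : Tendsto
      (fun m : ℕ =>
        ((max (wordLength {x, y, z} (φ^[m] x))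
            (max (wordLength {x, y, z} (φ^[m] y)) (wordLength {x, y, z} (φ^[m] z))) : ℕ) : ℝ) ^
          (1 / (m : ℝ)))
      atTop (nhds L)) :
    Tendsto (fun n : ℕ => (((φ^[n] z).b.natAbs : ℕ) : ℝ) ^ (1 / (n : ℝ))) atTop (nhds 4) ∧
      L ≤ 2 ∧ L < 4 := by
  have hzb : ∀ n : ℕ, ((φ^[n] z).b.natAbs : ℝ) = (4:ℝ)^n := by
    intro n
    rw [phi_iter]
    show ((((4:ℤ)^n * 1).natAbs : ℕ) : ℝ) = _
    rw [mul_one]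
    rw [show ((4:ℤ)^n) = ((4^n : ℕ) : ℤ) by push_cast; ring, Int.natAbs_natCast]
    push_cast; ring
  -- First part
  have part1 : Tendsto (fun n : ℕ => (((φ^[n] z).b.natAbs : ℕ) : ℝ) ^ (1 / (n : ℝ)))
      atTop (nhds 4) := by
    apply Tendsto.congr' _ tendsto_const_nhds
    filter_upwards [eventually_ge_atTop 1] with n hn
    have hn0 : (n : ℝ) ≠ 0 := by positivity
    rw [hzb n, ← Real.rpow_natCast (4:ℝ) n, ← Real.rpow_mul (by norm_num),
      mul_one_div, div_self hn0, Real.rpow_one]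
  -- bounds on word lengths
  set S : Set Heis := {x, y, z} with hS
  have hx : ∀ m : ℕ, wordLength S (φ^[m] x) ≤ 2^m := by
    intro m
    have := wordLength_le' S (φ^[m] x) (List.replicate (2^m) x)
      (mem_gen x (by simp [hS])) ?_
    · simpa using this
    · rw [List.prod_replicate, pow_x, phi_iter]
      ext <;> simp [x] <;> push_cast <;> ring
  have hy : ∀ m : ℕ, wordLength S (φ^[m] y) ≤ 2^m := by
    intro m
    have := wordLength_le' S (φ^[m] y) (List.replicate (2^m) y)
      (mem_gen y (by simp [hS])) ?_
    · simpa using this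
    · rw [List.prod_replicate, pow_y, phi_iter]
      ext <;> simp [y] <;> push_cast <;> ring
  have hz : ∀ m : ℕ, wordLength S (φ^[m] z) ≤ 4 * 2^m := by
    intro m
    set k : ℕ := 2^m with hk
    have := wordLength_le' S (φ^[m] z)
      (List.replicate k x ++ List.replicate k y ++ List.replicate k x⁻¹ ++ List.replicate k y⁻¹)
      ?_ ?_
    · exact le_trans (by simpa using this) (by omega)
    · intro u hu
      simp only [List.mem_append] at hu
      rcases hu with ((hu | hu) | hu) | hu <;> rw [List.eq_of_mem_replicate hu] <;>
        simp [hS, x, y, z, Heis.ext_iff]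
    · simp only [List.prod_append, List.prod_replicate, inv_pow, pow_x, pow_y, phi_iter]
      have h4 : ((4:ℤ)^m) = (k:ℤ) * k := by
        rw [hk]; push_cast
        rw [← pow_add, show (4:ℤ) = 2^2 by norm_num, ← pow_mul, two_mul]
      ext <;> simp [z, h4] <;> ring
  -- the comparison sequence tends to 2
  have hg : Tendsto (fun m : ℕ => ((4 * 2^m : ℕ) : ℝ) ^ (1 / (m : ℝ))) atTop (nhds 2) := by
    have e1 : Tendsto (fun m : ℕ => (4:ℝ) ^ (1 / (m : ℝ))) atTop (nhds 1) := by
      have hc : ContinuousAt (fun t : ℝ => (4:ℝ) ^ t) 0 :=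
        Real.continuousAt_const_rpow (by norm_num)
      have := hc.tendsto.comp tendsto_one_div_atTop_nhds_zero_nat
      simpa [Real.rpow_zero, Function.comp_def] using this
    have e2 : Tendsto (fun m : ℕ => (((2:ℝ)^m) : ℝ) ^ (1 / (m : ℝ))) atTop (nhds 2) := by
      apply Tendsto.congr' _ tendsto_const_nhds
      filter_upwards [eventually_ge_atTop 1] with m hm
      have hm0 : (m : ℝ) ≠ 0 := by positivity
      rw [← Real.rpow_natCast (2:ℝ) m, ← Real.rpow_mul (by norm_num),
        mul_one_div, div_self hm0, Real.rpow_one]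
    have := e1.mul e2
    rw [one_mul] at this
    apply this.congr
    intro m
    rw [← Real.mul_rpow (by norm_num) (by positivity)]
    push_cast; ring_nf
  -- L ≤ 2
  have hL2 : L ≤ 2 := by
    refine le_of_tendsto_of_tendsto' hL hg ?_
    intro m
    apply Real.rpow_le_rpow (by positivity) _ (by positivity)
    have hmax : max (wordLength S (φ^[m] x))
        (max (wordLength S (φ^[m] y)) (wordLength S (φ^[m] z))) ≤ 4 * 2^m := by
      refine max_le (le_trans (hx m) ?_) (max_le (le_trans (hy m) ?_) (hz m)) <;> omega
    exact_mod_cast hmax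
  exact ⟨part1, hL2, by linarith⟩
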